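/- For every n ≥ 0, the number of 2-distant noncrossing partitions of [n] equals the number of 12312-avoiding partitions of [n] (equivalently, 3-front noncrossing partitions). -/

import Mathlib

/-- `(i,j)` is a standard edge of the set partition `p` of `[n]`:
`i < j` lie in the same block with no block element strictly between them. -/
def stdEdge {n : ℕ} (p : Finpartition (Finset.Icc 1 n : Finset ℕ)) (i j : ℕ) : Prop :=
  i < j ∧ ∃ B ∈ p.parts, i ∈ B ∧ j ∈ B ∧ ∀ t ∈ B, ¬ (i < t ∧ t < j)

/-- `(i,j)` is a front edge: `i < j` lie in the same block and `i` is the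
minimum (head) of that block. -/
def frontEdge {n : ℕ} (p : Finpartition (Finset.Icc 1 n : Finset ℕ)) (i j : ℕ) : Prop :=
  i < j ∧ ∃ B ∈ p.parts, i ∈ B ∧ j ∈ B ∧ ∀ t ∈ B, i ≤ t

/-- `h` is a head of `p`, i.e. the minimum element of its block. -/
def isHead {n : ℕ} (p : Finpartition (Finset.Icc 1 n : Finset ℕ)) (h : ℕ) : Prop :=
  ∃ B ∈ p.parts, h ∈ B ∧ ∀ t ∈ B, h ≤ t

/-- `p` has no `k`-distant crossing: no standard edges `(i1,j1)`, `(i2,j2)` with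
`i1 < i2 < j1 < j2` and `j1 - i2 ≥ k`. -/
def kDistantNoncrossing {n : ℕ} (k : ℕ) (p : Finpartition (Finset.Icc 1 n : Finset ℕ)) : Prop :=
  ¬ ∃ i1 j1 i2 j2, stdEdge p i1 j1 ∧ stdEdge p i2 j2 ∧
    i1 < i2 ∧ i2 < j1 ∧ j1 < j2 ∧ k ≤ j1 - i2

/-- `p` has no `k`-front crossing: no front edges `(i1,j1)`, `(i2,j2)` with
`i1 < i2 < j1 < j2` and at least `k - 2` heads strictly between `i2` and `j1`.
This is equivalent to `p` being `12⋯k12`-avoiding. -/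
def kFrontNoncrossing {n : ℕ} (k : ℕ) (p : Finpartition (Finset.Icc 1 n : Finset ℕ)) : Prop :=
  ¬ ∃ i1 j1 i2 j2, frontEdge p i1 j1 ∧ frontEdge p i2 j2 ∧
    i1 < i2 ∧ i2 < j1 ∧ j1 < j2 ∧
    k - 2 ≤ Nat.card {h : ℕ // isHead p h ∧ i2 < h ∧ h < j1}

namespace DF23
open Finset

variable {n : ℕ}

abbrev FP (n : ℕ) := Finpartition (Finset.Icc 1 n : Finset ℕ)

lemma part_subset {p : FP n} {B : Finset ℕ} (hB : B ∈ p.parts) : B ⊆ Finset.Icc 1 n := p.le hB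

lemma mem_part_le {p : FP n} {B : Finset ℕ} (hB : B ∈ p.parts) {x : ℕ} (hx : x ∈ B) :
    1 ≤ x ∧ x ≤ n := by
  have := part_subset hB hx; rw [Finset.mem_Icc] at this; exact this

lemma notmem_part {p : FP n} {B : Finset ℕ} (hB : B ∈ p.parts) : n + 1 ∉ B := by
  intro h
  have := (mem_part_le hB h).2
  omega

lemma stdEdge_le {p : FP n} {i j : ℕ} (h : stdEdge p i j) : 1 ≤ i ∧ i ≤ n ∧ 1 ≤ j ∧ j ≤ n := by
  obtain ⟨_, B, hB, hi, hj, _⟩ := h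
  have h1 := mem_part_le hB hi
  have h2 := mem_part_le hB hj
  exact ⟨h1.1, h1.2, h2.1, h2.2⟩

lemma frontEdge_le {p : FP n} {i j : ℕ} (h : frontEdge p i j) : 1 ≤ i ∧ i ≤ n ∧ 1 ≤ j ∧ j ≤ n := by
  obtain ⟨_, B, hB, hi, hj, _⟩ := h
  have h1 := mem_part_le hB hi
  have h2 := mem_part_le hB hj
  exact ⟨h1.1, h1.2, h2.1, h2.2⟩

lemma isHead_le {p : FP n} {h : ℕ} (hh : isHead p h) : 1 ≤ h ∧ h ≤ n := by
  obtain ⟨B, hB, hi, _⟩ := hh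
  exact mem_part_le hB hi

/-- extension by a new singleton block `{n+1}` -/
def extS (p : FP n) : FP (n + 1) where
  parts := insert {n + 1} p.parts
  supIndep := by
    rw [Finset.supIndep_iff_pairwiseDisjoint, Finset.coe_insert]
    refine Set.PairwiseDisjoint.insert ?_ ?_
    · exact Finset.supIndep_iff_pairwiseDisjoint.mp p.supIndep
    · intro C hC _
      simp only [id]
      rw [Finset.disjoint_left]
      intro a ha
      rw [Finset.mem_singleton] at ha
      subst ha
      exact notmem_part hC
  sup_parts := by
    rw [Finset.sup_insert, p.sup_parts]
    ext x
    simp only [Finset.mem_Icc, id, Finset.sup_eq_union, Finset.mem_union, Finset.mem_singleton]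
    omega
  bot_notMem := by
    simp only [Finset.bot_eq_empty, Finset.mem_insert]
    rintro (h | h)
    · exact (Finset.singleton_ne_empty _) h.symm
    · exact p.bot_notMem h

@[simp] lemma parts_extS (p : FP n) : (extS p).parts = insert {n + 1} p.parts := rfl

/-- extension by inserting `n+1` into an existing block `B` -/
def extB (p : FP n) (B : Finset ℕ) (hB : B ∈ p.parts) : FP (n + 1) where
  parts := insert (insert (n + 1) B) (p.parts.erase B)
  supIndep := by
    rw [Finset.supIndep_iff_pairwiseDisjoint, Finset.coe_insert]
    refine Set.PairwiseDisjoint.insert ?_ ?_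
    · exact (Finset.supIndep_iff_pairwiseDisjoint.mp p.supIndep).subset
        (by exact_mod_cast Finset.erase_subset _ _)
    · intro C hC _
      simp only [Finset.mem_coe, Finset.mem_erase] at hC
      simp only [id]
      rw [Finset.disjoint_left]
      intro a ha
      rw [Finset.mem_insert] at ha
      rcases ha with rfl | ha
      · exact notmem_part hC.2
      · intro haC
        exact hC.1 (p.eq_of_mem_parts hB hC.2 ha haC).symm
  sup_parts := by
    have hp : ∀ x, x ∈ Finset.Icc 1 n ↔ ∃ C ∈ p.parts, x ∈ C := fun x =>
      ⟨p.exists_mem, fun ⟨C, hC, hx⟩ => part_subset hC hx⟩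
    ext x
    rw [Finset.mem_sup]
    constructor
    · rintro ⟨C, hC, hx⟩
      simp only [id] at hx
      rcases Finset.mem_insert.mp hC with rfl | hC
      · rcases Finset.mem_insert.mp hx with rfl | hx
        · simp
        · have := mem_part_le hB hx
          rw [Finset.mem_Icc]; omega
      · have := mem_part_le (Finset.erase_subset _ _ hC) hx
        rw [Finset.mem_Icc]; omega
    · intro hx
      rw [Finset.mem_Icc] at hx
      by_cases hx1 : x = n + 1
      · exact ⟨insert (n+1) B, Finset.mem_insert_self _ _, by simp [hx1]⟩
      · have hxn : x ∈ Finset.Icc 1 n := Finset.mem_Icc.mpr (by omega)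
        obtain ⟨C, hC, hxC⟩ := (hp x).mp hxn
        by_cases hCB : C = B
        · exact ⟨insert (n+1) B, Finset.mem_insert_self _ _,
            Finset.mem_insert_of_mem (hCB ▸ hxC)⟩
        · exact ⟨C, Finset.mem_insert_of_mem (Finset.mem_erase.mpr ⟨hCB, hC⟩), hxC⟩
  bot_notMem := by
    simp only [Finset.bot_eq_empty, Finset.mem_insert]
    rintro (h | h)
    · exact (Finset.insert_ne_empty _ _) h.symm
    · exact p.bot_notMem (Finset.erase_subset _ _ h)

@[simp] lemma parts_extB (p : FP n) (B : Finset ℕ) (hB : B ∈ p.parts) :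
    (extB p B hB).parts = insert (insert (n + 1) B) (p.parts.erase B) := rfl

end DF23
namespace DF23
open Finset

variable {n : ℕ}

lemma stdEdge_extS {p : FP n} {i j : ℕ} : stdEdge (extS p) i j ↔ stdEdge p i j := by
  constructor
  · rintro ⟨hij, C, hC, hi, hj, hbet⟩
    rcases Finset.mem_insert.mp hC with rfl | hC
    · rw [Finset.mem_singleton] at hi hj
      omega
    · exact ⟨hij, C, hC, hi, hj, hbet⟩
  · rintro ⟨hij, C, hC, hi, hj, hbet⟩
    exact ⟨hij, C, Finset.mem_insert_of_mem hC, hi, hj, hbet⟩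

lemma frontEdge_extS {p : FP n} {i j : ℕ} : frontEdge (extS p) i j ↔ frontEdge p i j := by
  constructor
  · rintro ⟨hij, C, hC, hi, hj, hmin⟩
    rcases Finset.mem_insert.mp hC with rfl | hC
    · rw [Finset.mem_singleton] at hi hj
      omega
    · exact ⟨hij, C, hC, hi, hj, hmin⟩
  · rintro ⟨hij, C, hC, hi, hj, hmin⟩
    exact ⟨hij, C, Finset.mem_insert_of_mem hC, hi, hj, hmin⟩

lemma isHead_extS {p : FP n} {h : ℕ} : isHead (extS p) h ↔ isHead p h ∨ h = n + 1 := by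
  constructor
  · rintro ⟨C, hC, hi, hmin⟩
    rcases Finset.mem_insert.mp hC with rfl | hC
    · right; exact Finset.mem_singleton.mp hi
    · left; exact ⟨C, hC, hi, hmin⟩
  · rintro (⟨C, hC, hi, hmin⟩ | rfl)
    · exact ⟨C, Finset.mem_insert_of_mem hC, hi, hmin⟩
    · exact ⟨({n+1} : Finset ℕ), Finset.mem_insert_self _ _, Finset.mem_singleton_self _,
        fun t ht => le_of_eq (Finset.mem_singleton.mp ht).symm⟩

lemma stdEdge_extB {p : FP n} {B : Finset ℕ} {hB : B ∈ p.parts} {i j : ℕ} :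
    stdEdge (extB p B hB) i j ↔
      stdEdge p i j ∨ (j = n + 1 ∧ i ∈ B ∧ ∀ t ∈ B, t ≤ i) := by
  constructor
  · rintro ⟨hij, C, hC, hi, hj, hbet⟩
    rcases Finset.mem_insert.mp hC with rfl | hC
    · have hiB : i ∈ B := by
        rcases Finset.mem_insert.mp hi with rfl | hi
        · rcases Finset.mem_insert.mp hj with rfl | hj
          · omega
          · have := (mem_part_le hB hj).2; omega
        · exact hi
      rcases Finset.mem_insert.mp hj with rfl | hjB
      · right
        refine ⟨rfl, hiB, fun t ht => ?_⟩
        have htn := (mem_part_le hB ht).2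
        have := hbet t (Finset.mem_insert_of_mem ht)
        omega
      · left
        exact ⟨hij, B, hB, hiB, hjB, fun t ht => hbet t (Finset.mem_insert_of_mem ht)⟩
    · exact Or.inl ⟨hij, C, Finset.mem_of_mem_erase hC, hi, hj, hbet⟩
  · rintro (⟨hij, C, hC, hi, hj, hbet⟩ | ⟨rfl, hiB, hmax⟩)
    · by_cases hCB : C = B
      · subst hCB
        refine ⟨hij, insert (n+1) C, Finset.mem_insert_self _ _,
          Finset.mem_insert_of_mem hi, Finset.mem_insert_of_mem hj, ?_⟩
        intro t ht
        rcases Finset.mem_insert.mp ht with rfl | ht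
        · have := (mem_part_le hB hj).2; omega
        · exact hbet t ht
      · exact ⟨hij, C, Finset.mem_insert_of_mem (Finset.mem_erase.mpr ⟨hCB, hC⟩), hi, hj, hbet⟩
    · have hin := (mem_part_le hB hiB).2
      refine ⟨by omega, insert (n+1) B, Finset.mem_insert_self _ _,
        Finset.mem_insert_of_mem hiB, Finset.mem_insert_self _ _, ?_⟩
      intro t ht
      rcases Finset.mem_insert.mp ht with rfl | ht
      · omega
      · have := hmax t ht; omega

lemma frontEdge_extB {p : FP n} {B : Finset ℕ} {hB : B ∈ p.parts} {i j : ℕ} :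
    frontEdge (extB p B hB) i j ↔
      frontEdge p i j ∨ (j = n + 1 ∧ i ∈ B ∧ ∀ t ∈ B, i ≤ t) := by
  constructor
  · rintro ⟨hij, C, hC, hi, hj, hmin⟩
    rcases Finset.mem_insert.mp hC with rfl | hC
    · have hiB : i ∈ B := by
        rcases Finset.mem_insert.mp hi with rfl | hi
        · rcases Finset.mem_insert.mp hj with rfl | hj
          · omega
          · have := (mem_part_le hB hj).2; omega
        · exact hi
      have hminB : ∀ t ∈ B, i ≤ t := fun t ht => hmin t (Finset.mem_insert_of_mem ht)
      rcases Finset.mem_insert.mp hj with rfl | hjB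
      · exact Or.inr ⟨rfl, hiB, hminB⟩
      · exact Or.inl ⟨hij, B, hB, hiB, hjB, hminB⟩
    · exact Or.inl ⟨hij, C, Finset.mem_of_mem_erase hC, hi, hj, hmin⟩
  · rintro (⟨hij, C, hC, hi, hj, hmin⟩ | ⟨rfl, hiB, hmin⟩)
    · by_cases hCB : C = B
      · subst hCB
        refine ⟨hij, insert (n+1) C, Finset.mem_insert_self _ _,
          Finset.mem_insert_of_mem hi, Finset.mem_insert_of_mem hj, ?_⟩
        intro t ht
        rcases Finset.mem_insert.mp ht with rfl | ht
        · have := (mem_part_le hB hi).2; omega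
        · exact hmin t ht
      · exact ⟨hij, C, Finset.mem_insert_of_mem (Finset.mem_erase.mpr ⟨hCB, hC⟩), hi, hj, hmin⟩
    · have hin := (mem_part_le hB hiB).2
      refine ⟨by omega, insert (n+1) B, Finset.mem_insert_self _ _,
        Finset.mem_insert_of_mem hiB, Finset.mem_insert_self _ _, ?_⟩
      intro t ht
      rcases Finset.mem_insert.mp ht with rfl | ht
      · omega
      · exact hmin t ht

lemma isHead_extB {p : FP n} {B : Finset ℕ} {hB : B ∈ p.parts} {h : ℕ} :
    isHead (extB p B hB) h ↔ isHead p h := by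
  constructor
  · rintro ⟨C, hC, hi, hmin⟩
    rcases Finset.mem_insert.mp hC with rfl | hC
    · have hiB : h ∈ B := by
        rcases Finset.mem_insert.mp hi with rfl | hi
        · obtain ⟨b, hb⟩ := p.nonempty_of_mem_parts hB
          have := (mem_part_le hB hb).2
          have := hmin b (Finset.mem_insert_of_mem hb)
          omega
        · exact hi
      exact ⟨B, hB, hiB, fun t ht => hmin t (Finset.mem_insert_of_mem ht)⟩
    · exact ⟨C, Finset.mem_of_mem_erase hC, hi, hmin⟩
  · rintro ⟨C, hC, hi, hmin⟩
    by_cases hCB : C = B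
    · subst hCB
      refine ⟨insert (n+1) C, Finset.mem_insert_self _ _, Finset.mem_insert_of_mem hi, ?_⟩
      intro t ht
      rcases Finset.mem_insert.mp ht with rfl | ht
      · have := (mem_part_le hB hi).2; omega
      · exact hmin t ht
    · exact ⟨C, Finset.mem_insert_of_mem (Finset.mem_erase.mpr ⟨hCB, hC⟩), hi, hmin⟩

end DF23
namespace DF23
open Finset

variable {n : ℕ}

lemma singleton_notmem_parts {p : FP n} : ({n + 1} : Finset ℕ) ∉ p.parts := by
  intro h
  exact notmem_part h (Finset.mem_singleton_self _)

lemma insert_notmem_parts {p : FP n} {B : Finset ℕ} : insert (n + 1) B ∉ p.parts := by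
  intro h
  exact notmem_part h (Finset.mem_insert_self _ _)

lemma insert_notmem_erase {p : FP n} {B C : Finset ℕ} : insert (n + 1) B ∉ p.parts.erase C :=
  fun h => insert_notmem_parts (Finset.mem_of_mem_erase h)

lemma extS_inj {p p' : FP n} (h : extS p = extS p') : p = p' := by
  have hparts : insert ({n+1} : Finset ℕ) p.parts = insert {n+1} p'.parts :=
    congrArg Finpartition.parts h
  apply Finpartition.ext
  have h1 := congrArg (fun s => Finset.erase s ({n+1} : Finset ℕ)) hparts
  simpa [Finset.erase_insert_of_ne, Finset.erase_eq_of_notMem singleton_notmem_parts,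
    Finset.erase_eq_of_notMem (singleton_notmem_parts (p := p'))] using h1

lemma extS_ne_extB {p p' : FP n} {B : Finset ℕ} {hB : B ∈ p'.parts} :
    extS p ≠ extB p' B hB := by
  intro h
  have hparts := congrArg Finpartition.parts h
  simp only [parts_extS, parts_extB] at hparts
  have hmem : ({n+1} : Finset ℕ) ∈ insert (insert (n+1) B) (p'.parts.erase B) := by
    rw [← hparts]; exact Finset.mem_insert_self _ _
  rcases Finset.mem_insert.mp hmem with heq | hmem
  · obtain ⟨b, hb⟩ := p'.nonempty_of_mem_parts hB
    have : b ∈ ({n+1} : Finset ℕ) := heq ▸ Finset.mem_insert_of_mem hb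
    rw [Finset.mem_singleton] at this
    exact notmem_part hB (this ▸ hb)
  · exact singleton_notmem_parts (Finset.mem_of_mem_erase hmem)

lemma extB_inj {p p' : FP n} {B B' : Finset ℕ} {hB : B ∈ p.parts} {hB' : B' ∈ p'.parts}
    (h : extB p B hB = extB p' B' hB') : p = p' ∧ B = B' := by
  have hparts := congrArg Finpartition.parts h
  simp only [parts_extB] at hparts
  have hX : insert (n+1) B = insert (n+1) B' := by
    have hmem : insert (n+1) B ∈ insert (insert (n+1) B') (p'.parts.erase B') := by
      rw [← hparts]; exact Finset.mem_insert_self _ _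
    rcases Finset.mem_insert.mp hmem with heq | hmem
    · exact heq
    · exact absurd hmem insert_notmem_erase
  have hBB : B = B' := by
    have h1 := congrArg (fun s => Finset.erase s (n+1)) hX
    simpa [Finset.erase_insert_of_ne, Finset.erase_eq_of_notMem (notmem_part hB),
      Finset.erase_eq_of_notMem (notmem_part hB')] using h1
  subst hBB
  refine ⟨?_, rfl⟩
  apply Finpartition.ext
  have h1 := congrArg (fun s => Finset.erase s (insert (n+1) B)) hparts
  rw [Finset.erase_insert insert_notmem_erase, Finset.erase_insert insert_notmem_erase] at h1
  rw [← Finset.insert_erase hB, ← Finset.insert_erase hB', h1]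

lemma ext_surj (q : FP (n + 1)) :
    (∃ p : FP n, q = extS p) ∨
      ∃ (p : FP n) (B : Finset ℕ) (hB : B ∈ p.parts), q = extB p B hB := by
  have hmem : n + 1 ∈ Finset.Icc 1 (n + 1) := by simp
  set P := q.part (n + 1) with hPdef
  have hP : P ∈ q.parts := q.part_mem.2 hmem
  have hnP : n + 1 ∈ P := q.mem_part hmem
  have hsub : ∀ C ∈ q.parts, C ≠ P → (n + 1) ∉ C := by
    intro C hC hne hmemC
    exact hne (q.eq_of_mem_parts hC hP hmemC hnP)
  by_cases hsing : P = {n + 1}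
  · left
    have hsup : (q.parts.erase P).sup id = Finset.Icc 1 n := by
      ext x
      rw [Finset.mem_sup]
      constructor
      · rintro ⟨C, hC, hx⟩
        simp only [id] at hx
        rw [Finset.mem_erase] at hC
        have h1 := mem_part_le hC.2 hx
        have h2 : x ≠ n + 1 := fun hxe => hsub C hC.2 hC.1 (hxe ▸ hx)
        rw [Finset.mem_Icc]; omega
      · intro hx
        rw [Finset.mem_Icc] at hx
        have hx' : x ∈ Finset.Icc 1 (n+1) := Finset.mem_Icc.mpr (by omega)
        obtain ⟨C, hC, hxC⟩ := q.exists_mem hx'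
        refine ⟨C, Finset.mem_erase.mpr ⟨?_, hC⟩, hxC⟩
        intro hCP
        subst hCP
        rw [hsing, Finset.mem_singleton] at hxC
        omega
    refine ⟨q.ofSubset (Finset.erase_subset _ _) hsup, ?_⟩
    apply Finpartition.ext
    rw [parts_extS]
    show q.parts = insert {n+1} (q.parts.erase P)
    rw [← hsing, Finset.insert_erase hP]
  · right
    set B := P.erase (n + 1) with hBdef
    have hBP : insert (n+1) B = P := Finset.insert_erase hnP
    have hBne : B.Nonempty := by
      rcases Finset.eq_empty_or_nonempty B with he | hne
      · exfalso
        apply hsing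
        rw [← hBP, he]
        rfl
      · exact hne
    have hBnotq : B ∉ q.parts := by
      intro hmemB
      obtain ⟨b, hb⟩ := hBne
      have hbP : b ∈ P := Finset.mem_of_mem_erase hb
      have hPP : B = P := q.eq_of_mem_parts hmemB hP hb hbP
      have h2 : n + 1 ∈ B := by rw [hPP]; exact hnP
      rw [hBdef] at h2
      exact Finset.notMem_erase _ _ h2
    -- build p
    have hsup : (insert B (q.parts.erase P)).sup id = Finset.Icc 1 n := by
      ext x
      rw [Finset.mem_sup]
      constructor
      · rintro ⟨C, hC, hx⟩
        simp only [id] at hx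
        rcases Finset.mem_insert.mp hC with rfl | hC
        · have h1 := mem_part_le hP (Finset.mem_of_mem_erase hx)
          have h2 : x ≠ n + 1 := Finset.ne_of_mem_erase hx
          rw [Finset.mem_Icc]; omega
        · rw [Finset.mem_erase] at hC
          have h1 := mem_part_le hC.2 hx
          have h2 : x ≠ n + 1 := fun hxe => hsub C hC.2 hC.1 (hxe ▸ hx)
          rw [Finset.mem_Icc]; omega
      · intro hx
        rw [Finset.mem_Icc] at hx
        have hx' : x ∈ Finset.Icc 1 (n+1) := Finset.mem_Icc.mpr (by omega)
        obtain ⟨C, hC, hxC⟩ := q.exists_mem hx'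
        by_cases hCP : C = P
        · subst hCP
          exact ⟨B, Finset.mem_insert_self _ _,
            Finset.mem_erase.mpr ⟨by omega, hxC⟩⟩
        · exact ⟨C, Finset.mem_insert_of_mem (Finset.mem_erase.mpr ⟨hCP, hC⟩), hxC⟩
    have hdisj : (insert B (q.parts.erase P) : Finset (Finset ℕ)).SupIndep id := by
      rw [Finset.supIndep_iff_pairwiseDisjoint, Finset.coe_insert]
      refine Set.PairwiseDisjoint.insert ?_ ?_
      · exact (Finset.supIndep_iff_pairwiseDisjoint.mp q.supIndep).subset
          (by exact_mod_cast Finset.erase_subset _ _)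
      · intro C hC _
        simp only [Finset.mem_coe, Finset.mem_erase] at hC
        simp only [id]
        rw [Finset.disjoint_left]
        intro a ha haC
        have haP : a ∈ P := Finset.mem_of_mem_erase ha
        exact hC.1 (q.eq_of_mem_parts hC.2 hP haC haP)
    have hbot : (⊥ : Finset ℕ) ∉ insert B (q.parts.erase P) := by
      simp only [Finset.bot_eq_empty, Finset.mem_insert]
      rintro (h | h)
      · exact Finset.nonempty_iff_ne_empty.mp hBne h.symm
      · exact q.bot_notMem (Finset.erase_subset _ _ h)
    refine ⟨⟨insert B (q.parts.erase P), hdisj, hsup, hbot⟩, B, Finset.mem_insert_self _ _, ?_⟩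
    apply Finpartition.ext
    rw [parts_extB]
    show q.parts = insert (insert (n+1) B) ((insert B (q.parts.erase P)).erase B)
    rw [Finset.erase_insert]
    · rw [hBP, Finset.insert_erase hP]
    · intro hmemB
      exact hBnotq (Finset.mem_of_mem_erase hmemB)
end DF23
namespace DF23
open Finset

variable {n : ℕ}

instance head_between_finite (p : FP n) (a b : ℕ) :
    Finite {h : ℕ // isHead p h ∧ a < h ∧ h < b} := by
  apply Finite.of_injective (fun x => (⟨x.1, x.2.2.2⟩ : Fin b))
  intro x y hxy
  exact Subtype.ext (congrArg Fin.val hxy)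

lemma fnc_iff (p : FP n) : kFrontNoncrossing 3 p ↔
    ¬ ∃ i1 j1 i2 j2, frontEdge p i1 j1 ∧ frontEdge p i2 j2 ∧
      i1 < i2 ∧ i2 < j1 ∧ j1 < j2 ∧ ∃ y, isHead p y ∧ i2 < y ∧ y < j1 := by
  unfold kFrontNoncrossing
  constructor
  · intro H ⟨i1, j1, i2, j2, e1, e2, h1, h2, h3, y, hy⟩
    apply H
    refine ⟨i1, j1, i2, j2, e1, e2, h1, h2, h3, ?_⟩
    have hne : Nonempty {h : ℕ // isHead p h ∧ i2 < h ∧ h < j1} := ⟨⟨y, hy⟩⟩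
    have h5 : 0 < Nat.card {h : ℕ // isHead p h ∧ i2 < h ∧ h < j1} :=
      Nat.card_pos_iff.mpr ⟨hne, head_between_finite p i2 j1⟩
    omega
  · intro H ⟨i1, j1, i2, j2, e1, e2, h1, h2, h3, h4⟩
    apply H
    refine ⟨i1, j1, i2, j2, e1, e2, h1, h2, h3, ?_⟩
    have h5 : 0 < Nat.card {h : ℕ // isHead p h ∧ i2 < h ∧ h < j1} := by omega
    obtain ⟨⟨y, hy⟩⟩ := (Nat.card_pos_iff.mp h5).1
    exact ⟨y, hy⟩

lemma Dnc_extS {p : FP n} : kDistantNoncrossing 2 (extS p) ↔ kDistantNoncrossing 2 p := by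
  unfold kDistantNoncrossing
  simp only [stdEdge_extS]

lemma Fnc_extS {p : FP n} : kFrontNoncrossing 3 (extS p) ↔ kFrontNoncrossing 3 p := by
  rw [fnc_iff, fnc_iff]
  constructor <;> intro H ⟨i1, j1, i2, j2, e1, e2, h1, h2, h3, y, hy1, hy2, hy3⟩ <;> apply H
  · exact ⟨i1, j1, i2, j2, frontEdge_extS.mpr e1, frontEdge_extS.mpr e2, h1, h2, h3,
      y, isHead_extS.mpr (Or.inl hy1), hy2, hy3⟩
  · rw [frontEdge_extS] at e1 e2
    rcases isHead_extS.mp hy1 with hy1 | rfl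
    · exact ⟨i1, j1, i2, j2, e1, e2, h1, h2, h3, y, hy1, hy2, hy3⟩
    · have := (frontEdge_le e1).2.2.2
      omega

lemma Dnc_extB {p : FP n} {B : Finset ℕ} (hB : B ∈ p.parts) {m : ℕ}
    (hm : m ∈ B) (hmax : ∀ t ∈ B, t ≤ m) :
    kDistantNoncrossing 2 (extB p B hB) ↔
      kDistantNoncrossing 2 p ∧
        ¬ ∃ i j, stdEdge p i j ∧ i < m ∧ m < j ∧ m + 2 ≤ j := by
  have hnew : ∀ i, (i ∈ B ∧ ∀ t ∈ B, t ≤ i) ↔ i = m := fun i =>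
    ⟨fun ⟨hi, hle⟩ => le_antisymm (hle m hm) (hmax i hi) |>.symm ▸ rfl,
     fun h => h ▸ ⟨hm, hmax⟩⟩
  constructor
  · intro H
    constructor
    · intro ⟨i1, j1, i2, j2, e1, e2, h1, h2, h3, h4⟩
      exact H ⟨i1, j1, i2, j2, stdEdge_extB.mpr (Or.inl e1), stdEdge_extB.mpr (Or.inl e2),
        h1, h2, h3, h4⟩
    · intro ⟨i, j, e, hc1, hc2, hc3⟩
      have hjn := (stdEdge_le e).2.2.2
      exact H ⟨i, j, m, n + 1, stdEdge_extB.mpr (Or.inl e),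
        stdEdge_extB.mpr (Or.inr ⟨rfl, hm, hmax⟩), hc1, hc2, by omega, by omega⟩
  · intro ⟨hp, hc⟩ ⟨i1, j1, i2, j2, e1, e2, h1, h2, h3, h4⟩
    rcases stdEdge_extB.mp e1 with e1 | ⟨rfl, hi1, hle1⟩
    · rcases stdEdge_extB.mp e2 with e2 | ⟨rfl, hi2, hle2⟩
      · exact hp ⟨i1, j1, i2, j2, e1, e2, h1, h2, h3, h4⟩
      · have hi2m : i2 = m := (hnew i2).mp ⟨hi2, hle2⟩
        subst hi2m
        exact hc ⟨i1, j1, e1, h1, h2, by omega⟩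
    · rcases stdEdge_extB.mp e2 with e2 | ⟨rfl, hi2, hle2⟩
      · have := (stdEdge_le e2).2.2.2
        omega
      · omega

lemma Fnc_extB {p : FP n} {B : Finset ℕ} (hB : B ∈ p.parts) {h : ℕ}
    (hh : h ∈ B) (hmin : ∀ t ∈ B, h ≤ t) :
    kFrontNoncrossing 3 (extB p B hB) ↔
      kFrontNoncrossing 3 p ∧
        ¬ ∃ i j, frontEdge p i j ∧ i < h ∧ h < j ∧
          ∃ y, isHead p y ∧ h < y ∧ y < j := by
  have hnew : ∀ i, (i ∈ B ∧ ∀ t ∈ B, i ≤ t) ↔ i = h := fun i =>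
    ⟨fun ⟨hi, hle⟩ => le_antisymm (hle h hh) (hmin i hi) |>.symm ▸ rfl,
     fun he => he ▸ ⟨hh, hmin⟩⟩
  rw [fnc_iff, fnc_iff]
  constructor
  · intro H
    constructor
    · intro ⟨i1, j1, i2, j2, e1, e2, h1, h2, h3, y, hy1, hy2, hy3⟩
      exact H ⟨i1, j1, i2, j2, frontEdge_extB.mpr (Or.inl e1),
        frontEdge_extB.mpr (Or.inl e2), h1, h2, h3, y, isHead_extB.mpr hy1, hy2, hy3⟩
    · intro ⟨i, j, e, hc1, hc2, y, hy1, hy2, hy3⟩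
      have hjn := (frontEdge_le e).2.2.2
      exact H ⟨i, j, h, n + 1, frontEdge_extB.mpr (Or.inl e),
        frontEdge_extB.mpr (Or.inr ⟨rfl, hh, hmin⟩), hc1, hc2, by omega,
        y, isHead_extB.mpr hy1, hy2, hy3⟩
  · intro ⟨hp, hc⟩ ⟨i1, j1, i2, j2, e1, e2, h1, h2, h3, y, hy1, hy2, hy3⟩
    rw [isHead_extB] at hy1
    rcases frontEdge_extB.mp e1 with e1 | ⟨rfl, hi1, hle1⟩
    · rcases frontEdge_extB.mp e2 with e2 | ⟨rfl, hi2, hle2⟩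
      · exact hp ⟨i1, j1, i2, j2, e1, e2, h1, h2, h3, y, hy1, hy2, hy3⟩
      · have hi2h : i2 = h := (hnew i2).mp ⟨hi2, hle2⟩
        subst hi2h
        exact hc ⟨i1, j1, e1, h1, h2, y, hy1, hy2, hy3⟩
    · rcases frontEdge_extB.mp e2 with e2 | ⟨rfl, hi2, hle2⟩
      · have := (frontEdge_le e2).2.2.2
        omega
      · omega

end DF23
namespace DF23
open Finset

variable {n : ℕ}

open scoped Classical

/-- maxima of "active" blocks for the 2-distant noncrossing structure -/
noncomputable def Dkeys (p : FP n) : Finset ℕ :=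
  (Finset.Icc 1 n).filter (fun m =>
    (∃ B ∈ p.parts, m ∈ B ∧ ∀ t ∈ B, t ≤ m) ∧
    ¬ ∃ i j, stdEdge p i j ∧ i < m ∧ m < j ∧ m + 2 ≤ j)

/-- heads of "active" blocks for the 12312-avoiding structure -/
noncomputable def Fkeys (p : FP n) : Finset ℕ :=
  (Finset.Icc 1 n).filter (fun h =>
    isHead p h ∧
    ¬ ∃ i j, frontEdge p i j ∧ i < h ∧ h < j ∧ ∃ y, isHead p y ∧ h < y ∧ y < j)

lemma mem_Dkeys {p : FP n} {m : ℕ} : m ∈ Dkeys p ↔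
    (∃ B ∈ p.parts, m ∈ B ∧ ∀ t ∈ B, t ≤ m) ∧
    ¬ ∃ i j, stdEdge p i j ∧ i < m ∧ m < j ∧ m + 2 ≤ j := by
  unfold Dkeys
  rw [Finset.mem_filter, and_iff_right_iff_imp]
  rintro ⟨⟨B, hB, hm, _⟩, _⟩
  have := mem_part_le hB hm
  rw [Finset.mem_Icc]; omega

lemma mem_Fkeys {p : FP n} {h : ℕ} : h ∈ Fkeys p ↔
    isHead p h ∧
    ¬ ∃ i j, frontEdge p i j ∧ i < h ∧ h < j ∧ ∃ y, isHead p y ∧ h < y ∧ y < j := by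
  unfold Fkeys
  rw [Finset.mem_filter, and_iff_right_iff_imp]
  rintro ⟨hh, _⟩
  have := isHead_le hh
  rw [Finset.mem_Icc]; omega

noncomputable def labelD (p : FP n) : ℕ := (Dkeys p).card + 1
noncomputable def labelF (p : FP n) : ℕ := (Fkeys p).card + 1

lemma Dkeys_le {p : FP n} {m : ℕ} (hm : m ∈ Dkeys p) : 1 ≤ m ∧ m ≤ n := by
  obtain ⟨⟨B, hB, hmB, _⟩, _⟩ := mem_Dkeys.mp hm
  exact mem_part_le hB hmB

lemma Fkeys_le {p : FP n} {m : ℕ} (hm : m ∈ Fkeys p) : 1 ≤ m ∧ m ≤ n := by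
  obtain ⟨hh, _⟩ := mem_Fkeys.mp hm
  exact isHead_le hh

lemma n_mem_Dkeys (hn : 1 ≤ n) (p : FP n) : n ∈ Dkeys p := by
  rw [mem_Dkeys]
  have hmem : n ∈ Finset.Icc 1 n := Finset.mem_Icc.mpr ⟨hn, le_rfl⟩
  refine ⟨⟨p.part n, p.part_mem.2 hmem, p.mem_part hmem, fun t ht =>
    (mem_part_le (p.part_mem.2 hmem) ht).2⟩, ?_⟩
  rintro ⟨i, j, e, h1, h2, h3⟩
  have := (stdEdge_le e).2.2.2
  omega

lemma exists_topF (hn : 1 ≤ n) (p : FP n) : ∃ H ∈ Fkeys p, ∀ y, isHead p y → y ≤ H := by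
  classical
  set Hs := (Finset.Icc 1 n).filter (fun y => isHead p y) with hHs
  have hne : Hs.Nonempty := by
    have h1 : (1 : ℕ) ∈ Finset.Icc 1 n := Finset.mem_Icc.mpr ⟨le_rfl, hn⟩
    have hB := p.part_mem.2 h1
    obtain ⟨b, hb⟩ := p.nonempty_of_mem_parts hB
    have hbne : (p.part 1).Nonempty := ⟨b, hb⟩
    have hhead : isHead p ((p.part 1).min' hbne) :=
      ⟨p.part 1, hB, Finset.min'_mem _ _, fun t ht => Finset.min'_le _ _ ht⟩
    refine ⟨(p.part 1).min' hbne, Finset.mem_filter.mpr ⟨?_, hhead⟩⟩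
    have := isHead_le hhead
    rw [Finset.mem_Icc]; omega
  set H := Hs.max' hne with hH
  have hHhead : isHead p H := (Finset.mem_filter.mp (Hs.max'_mem hne)).2
  have htop : ∀ y, isHead p y → y ≤ H := by
    intro y hy
    apply Finset.le_max'
    rw [hHs, Finset.mem_filter]
    have := isHead_le hy
    exact ⟨Finset.mem_Icc.mpr ⟨this.1, this.2⟩, hy⟩
  refine ⟨H, mem_Fkeys.mpr ⟨hHhead, ?_⟩, htop⟩
  rintro ⟨i, j, e, h1, h2, y, hy, hy2, hy3⟩
  have := htop y hy
  omega

lemma Dkeys_extS (p : FP n) : Dkeys (extS p) = insert (n + 1) (Dkeys p) := by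
  ext x
  rw [mem_Dkeys, Finset.mem_insert, mem_Dkeys]
  constructor
  · rintro ⟨⟨B, hB, hx, hmax⟩, hcond⟩
    rcases Finset.mem_insert.mp hB with rfl | hB
    · left; exact Finset.mem_singleton.mp hx
    · right
      refine ⟨⟨B, hB, hx, hmax⟩, ?_⟩
      rintro ⟨i, j, e, h1, h2, h3⟩
      exact hcond ⟨i, j, stdEdge_extS.mpr e, h1, h2, h3⟩
  · rintro (rfl | ⟨⟨B, hB, hx, hmax⟩, hcond⟩)
    · refine ⟨⟨({n + 1} : Finset ℕ), Finset.mem_insert_self _ _, Finset.mem_singleton_self _,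
        fun t ht => le_of_eq (Finset.mem_singleton.mp ht)⟩, ?_⟩
      rintro ⟨i, j, e, h1, h2, h3⟩
      have := (stdEdge_le (stdEdge_extS.mp e)).2.2.2
      omega
    · refine ⟨⟨B, Finset.mem_insert_of_mem hB, hx, hmax⟩, ?_⟩
      rintro ⟨i, j, e, h1, h2, h3⟩
      exact hcond ⟨i, j, stdEdge_extS.mp e, h1, h2, h3⟩

lemma Fkeys_extS (p : FP n) : Fkeys (extS p) = insert (n + 1) (Fkeys p) := by
  ext x
  rw [mem_Fkeys, Finset.mem_insert, mem_Fkeys]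
  constructor
  · rintro ⟨hhead, hcond⟩
    rcases isHead_extS.mp hhead with hhead | rfl
    · right
      refine ⟨hhead, ?_⟩
      rintro ⟨i, j, e, h1, h2, y, hy1, hy2, hy3⟩
      exact hcond ⟨i, j, frontEdge_extS.mpr e, h1, h2, y, isHead_extS.mpr (Or.inl hy1), hy2, hy3⟩
    · left; rfl
  · rintro (rfl | ⟨hhead, hcond⟩)
    · refine ⟨isHead_extS.mpr (Or.inr rfl), ?_⟩
      rintro ⟨i, j, e, h1, h2, y, hy1, hy2, hy3⟩
      have := (frontEdge_le (frontEdge_extS.mp e)).2.2.2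
      omega
    · refine ⟨isHead_extS.mpr (Or.inl hhead), ?_⟩
      rintro ⟨i, j, e, h1, h2, y, hy1, hy2, hy3⟩
      rw [frontEdge_extS] at e
      have hjn := (frontEdge_le e).2.2.2
      rcases isHead_extS.mp hy1 with hy1 | rfl
      · exact hcond ⟨i, j, e, h1, h2, y, hy1, hy2, hy3⟩
      · omega

lemma Dkeys_extB {p : FP n} {B : Finset ℕ} (hB : B ∈ p.parts) {m : ℕ}
    (hm : m ∈ B) (hmax : ∀ t ∈ B, t ≤ m) :
    Dkeys (extB p B hB) =
      insert (n + 1) ((Dkeys p).filter (fun x => x < m ∨ (m < x ∧ x = n))) := by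
  classical
  have hmn := mem_part_le hB hm
  ext x
  rw [mem_Dkeys, Finset.mem_insert, Finset.mem_filter, mem_Dkeys]
  constructor
  · rintro ⟨⟨C, hC, hx, hmaxC⟩, hcond⟩
    rcases Finset.mem_insert.mp hC with rfl | hC
    · left
      by_contra hne
      have hxB : x ∈ B := by
        rcases Finset.mem_insert.mp hx with rfl | hx
        · exact absurd rfl hne
        · exact hx
      have := hmaxC (n + 1) (Finset.mem_insert_self _ _)
      have := (mem_part_le hB hxB).2
      omega
    · right
      have hCparts := Finset.mem_of_mem_erase hC
      have hxn := (mem_part_le hCparts hx).2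
      have hxm : x ≠ m := by
        intro h
        subst h
        exact (Finset.ne_of_mem_erase hC) (p.eq_of_mem_parts hCparts hB hx hm)
      refine ⟨⟨⟨C, hCparts, hx, hmaxC⟩, ?_⟩, ?_⟩
      · rintro ⟨i, j, e, h1, h2, h3⟩
        exact hcond ⟨i, j, stdEdge_extB.mpr (Or.inl e), h1, h2, h3⟩
      · by_contra hpred
        push_neg at hpred
        have h1 : m < x := lt_of_le_of_ne hpred.1 (Ne.symm hxm)
        have h2 : x ≠ n := hpred.2 h1
        exact hcond ⟨m, n + 1, stdEdge_extB.mpr (Or.inr ⟨rfl, hm, hmax⟩), h1, by omega, by omega⟩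
  · rintro (rfl | ⟨⟨⟨C, hC, hx, hmaxC⟩, hcond⟩, hpred⟩)
    · refine ⟨⟨insert (n + 1) B, Finset.mem_insert_self _ _, Finset.mem_insert_self _ _, ?_⟩, ?_⟩
      · intro t ht
        rcases Finset.mem_insert.mp ht with rfl | ht
        · exact le_rfl
        · have := (mem_part_le hB ht).2; omega
      · rintro ⟨i, j, e, h1, h2, h3⟩
        rcases stdEdge_extB.mp e with e | ⟨rfl, _, _⟩
        · have := (stdEdge_le e).2.2.2; omega
        · omega
    · have hxn := (mem_part_le hC hx).2
      have hCB : C ≠ B := by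
        intro heq
        subst heq
        have hxm : x = m := le_antisymm (hmax x hx) (hmaxC m hm)
        rcases hpred with h1 | ⟨h1, _⟩ <;> omega
      refine ⟨⟨C, Finset.mem_insert_of_mem (Finset.mem_erase.mpr ⟨hCB, hC⟩), hx, hmaxC⟩, ?_⟩
      rintro ⟨i, j, e, h1, h2, h3⟩
      rcases stdEdge_extB.mp e with e | ⟨rfl, hiB, hmaxi⟩
      · exact hcond ⟨i, j, e, h1, h2, h3⟩
      · have him : i = m := le_antisymm (hmax i hiB) (hmaxi m hm)
        rcases hpred with hlt | ⟨hgt, rfl⟩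
        · omega
        · omega

lemma Fkeys_extB {p : FP n} {B : Finset ℕ} (hB : B ∈ p.parts) {h : ℕ}
    (hh : h ∈ B) (hmin : ∀ t ∈ B, h ≤ t) :
    Fkeys (extB p B hB) =
      (Fkeys p).filter (fun x => x ≤ h ∨ ∀ y, isHead p y → y ≤ x) := by
  classical
  ext x
  rw [mem_Fkeys, Finset.mem_filter, mem_Fkeys]
  constructor
  · rintro ⟨hhead, hcond⟩
    rw [isHead_extB] at hhead
    have hxn := (isHead_le hhead).2
    refine ⟨⟨hhead, ?_⟩, ?_⟩
    · rintro ⟨i, j, e, h1, h2, y, hy1, hy2, hy3⟩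
      exact hcond ⟨i, j, frontEdge_extB.mpr (Or.inl e), h1, h2, y,
        isHead_extB.mpr hy1, hy2, hy3⟩
    · by_contra hpred
      push_neg at hpred
      obtain ⟨y, hy1, hy2⟩ := hpred.2
      have hyn := (isHead_le hy1).2
      exact hcond ⟨h, n + 1, frontEdge_extB.mpr (Or.inr ⟨rfl, hh, hmin⟩), hpred.1,
        by omega, y, isHead_extB.mpr hy1, hy2, by omega⟩
  · rintro ⟨⟨hhead, hcond⟩, hpred⟩
    refine ⟨isHead_extB.mpr hhead, ?_⟩
    rintro ⟨i, j, e, h1, h2, y, hy1, hy2, hy3⟩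
    rw [isHead_extB] at hy1
    rcases frontEdge_extB.mp e with e | ⟨rfl, hiB, hmini⟩
    · exact hcond ⟨i, j, e, h1, h2, y, hy1, hy2, hy3⟩
    · have hih : i = h := le_antisymm (hmini h hh) (hmin i hiB)
      subst hih
      rcases hpred with hle | htop
      · omega
      · have := htop y hy1
        omega

end DF23
namespace DF23
open Finset

variable {n : ℕ}

/-- number of elements of `s` smaller than `x` -/
def rank (s : Finset ℕ) (x : ℕ) : ℕ := (s.filter (· < x)).card

lemma filter_lt_of_max {s : Finset ℕ} {x : ℕ} (hx : x ∈ s) (hmax : ∀ y ∈ s, y ≤ x) :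
    s.filter (· < x) = s.erase x := by
  ext y
  rw [Finset.mem_filter, Finset.mem_erase]
  constructor
  · rintro ⟨hy, hlt⟩
    exact ⟨ne_of_lt hlt, hy⟩
  · rintro ⟨hne, hy⟩
    exact ⟨hy, lt_of_le_of_ne (hmax y hy) hne⟩

lemma rank_max {s : Finset ℕ} {x : ℕ} (hx : x ∈ s) (hmax : ∀ y ∈ s, y ≤ x) :
    rank s x = s.card - 1 := by
  rw [rank, filter_lt_of_max hx hmax, Finset.card_erase_of_mem hx]

lemma rank_plus_two_le {s : Finset ℕ} {x y : ℕ} (hx : x ∈ s) (hy : y ∈ s) (hxy : x < y) :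
    rank s x + 2 ≤ s.card := by
  have hsub : s.filter (· < x) ⊆ (s.erase x).erase y := by
    intro z hz
    rw [Finset.mem_filter] at hz
    rw [Finset.mem_erase, Finset.mem_erase]
    exact ⟨by omega, by omega, hz.1⟩
  have hcard : ((s.erase x).erase y).card = s.card - 2 := by
    rw [Finset.card_erase_of_mem (Finset.mem_erase.mpr ⟨by omega, hy⟩),
      Finset.card_erase_of_mem hx]
    omega
  have h2 : 1 < s.card := Finset.one_lt_card.mpr ⟨x, hx, y, hy, by omega⟩
  have := Finset.card_le_card hsub
  rw [hcard] at this
  unfold rank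
  omega

lemma rank_orderIsoOfFin (s : Finset ℕ) {k : ℕ} (h : s.card = k) (i : Fin k) :
    rank s ((s.orderIsoOfFin h i) : ℕ) = i := by
  classical
  have hcoe : ((s.orderIsoOfFin h i) : ℕ) = s.orderEmbOfFin h i :=
    Finset.coe_orderIsoOfFin_apply s h i
  rw [hcoe]
  have hinj : Function.Injective (s.orderEmbOfFin h) := (s.orderEmbOfFin h).injective
  have himg : s.filter (· < s.orderEmbOfFin h i) =
      (Finset.univ.filter (fun j : Fin k => j < i)).image (s.orderEmbOfFin h) := by
    ext x
    simp only [Finset.mem_filter, Finset.mem_image, Finset.mem_univ, true_and]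
    constructor
    · rintro ⟨hx, hlt⟩
      have hr : x ∈ Set.range (s.orderEmbOfFin h) := by
        rw [Finset.range_orderEmbOfFin]
        exact hx
      obtain ⟨j, rfl⟩ := hr
      exact ⟨j, (s.orderEmbOfFin h).lt_iff_lt.mp hlt, rfl⟩
    · rintro ⟨j, hj, rfl⟩
      exact ⟨Finset.orderEmbOfFin_mem s h j, (s.orderEmbOfFin h).lt_iff_lt.mpr hj⟩
  rw [rank, himg, Finset.card_image_of_injective _ hinj]
  have : Finset.univ.filter (fun j : Fin k => j < i) = Finset.Iio i := by
    ext j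
    simp [Finset.mem_Iio]
  rw [this, Fin.card_Iio]

lemma orderIsoOfFin_mem {s : Finset ℕ} {k : ℕ} (h : s.card = k) (i : Fin k) :
    ((s.orderIsoOfFin h i) : ℕ) ∈ s := (s.orderIsoOfFin h i).2

end DF23
namespace DF23
open Finset

variable {n : ℕ}

open scoped Classical

/-- the label succession rule of the common generating tree -/
def lrule (l : ℕ) : Option ℕ → ℕ
  | none => l + 1
  | some r => if r + 2 = l then l else r + 3

lemma labelD_extS (p : FP n) : labelD (extS p) = labelD p + 1 := by
  unfold labelD
  rw [Dkeys_extS, Finset.card_insert_of_notMem]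
  intro hmem
  have := (Dkeys_le hmem).2
  omega

lemma labelF_extS (p : FP n) : labelF (extS p) = labelF p + 1 := by
  unfold labelF
  rw [Fkeys_extS, Finset.card_insert_of_notMem]
  intro hmem
  have := (Fkeys_le hmem).2
  omega

lemma labelD_extB {p : FP n} {B : Finset ℕ} (hB : B ∈ p.parts) {m : ℕ}
    (hm : m ∈ B) (hmax : ∀ t ∈ B, t ≤ m) (hkey : m ∈ Dkeys p) :
    labelD (extB p B hB) = lrule (labelD p) (some (rank (Dkeys p) m)) := by
  have hmn := mem_part_le hB hm
  have hn1 : 1 ≤ n := by omega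
  have hnk : n ∈ Dkeys p := n_mem_Dkeys hn1 p
  have hnmax : ∀ y ∈ Dkeys p, y ≤ n := fun y hy => (Dkeys_le hy).2
  have hcardpos : 1 ≤ (Dkeys p).card := Finset.card_pos.mpr ⟨n, hnk⟩
  unfold labelD
  rw [Dkeys_extB hB hm hmax]
  by_cases hmeq : m = n
  · subst hmeq
    have hfe : (Dkeys p).filter (fun x => x < m ∨ (m < x ∧ x = m)) = (Dkeys p).erase m := by
      rw [← filter_lt_of_max hkey hnmax]
      apply Finset.filter_congr
      intro x _
      constructor
      · rintro (hx | ⟨hx, rfl⟩)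
        · exact hx
        · omega
      · exact Or.inl
    rw [hfe, Finset.card_insert_of_notMem (fun hmem => by
      have := (Dkeys_le (Finset.mem_of_mem_erase hmem)).2; omega)]
    rw [Finset.card_erase_of_mem hkey]
    rw [rank_max hkey hnmax]
    simp only [lrule]
    rw [if_pos (by omega)]
    omega
  · have hmltn : m < n := by omega
    have hfe : (Dkeys p).filter (fun x => x < m ∨ (m < x ∧ x = n)) =
        insert n ((Dkeys p).filter (· < m)) := by
      ext x
      rw [Finset.mem_filter, Finset.mem_insert, Finset.mem_filter]
      constructor
      · rintro ⟨hx, hlt | ⟨_, rfl⟩⟩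
        · exact Or.inr ⟨hx, hlt⟩
        · exact Or.inl rfl
      · rintro (rfl | ⟨hx, hlt⟩)
        · exact ⟨hnk, Or.inr ⟨hmltn, rfl⟩⟩
        · exact ⟨hx, Or.inl hlt⟩
    rw [hfe]
    rw [Finset.card_insert_of_notMem (fun hmem => by
      rcases Finset.mem_insert.mp hmem with heq | hmem
      · omega
      · have := (Finset.mem_filter.mp hmem).2
        omega)]
    rw [Finset.card_insert_of_notMem (fun hmem => by
      have := (Finset.mem_filter.mp hmem).2
      omega)]
    have hlt : rank (Dkeys p) m + 2 ≤ (Dkeys p).card := rank_plus_two_le hkey hnk hmltn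
    simp only [lrule]
    rw [if_neg (by omega)]
    unfold rank
    omega

lemma labelF_extB {p : FP n} {B : Finset ℕ} (hB : B ∈ p.parts) {h : ℕ}
    (hh : h ∈ B) (hmin : ∀ t ∈ B, h ≤ t) (hkey : h ∈ Fkeys p) :
    labelF (extB p B hB) = lrule (labelF p) (some (rank (Fkeys p) h)) := by
  have hhn := (Fkeys_le hkey).2
  have hn1 : 1 ≤ n := by
    have := (Fkeys_le hkey).1
    omega
  obtain ⟨H, hHk, hHtop⟩ := exists_topF hn1 p
  have hkeyhead : ∀ x ∈ Fkeys p, isHead p x := fun x hx => (mem_Fkeys.mp hx).1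
  unfold labelF
  rw [Fkeys_extB hB hh hmin]
  by_cases htop : ∀ y, isHead p y → y ≤ h
  · have hfe : (Fkeys p).filter (fun x => x ≤ h ∨ ∀ y, isHead p y → y ≤ x) = Fkeys p := by
      apply Finset.filter_true_of_mem
      intro x hx
      exact Or.inl (htop x (hkeyhead x hx))
    rw [hfe]
    have hmax : ∀ y ∈ Fkeys p, y ≤ h := fun y hy => htop y (hkeyhead y hy)
    rw [rank_max hkey hmax]
    have hcardpos : 1 ≤ (Fkeys p).card := Finset.card_pos.mpr ⟨h, hkey⟩
    simp only [lrule]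
    rw [if_pos (by omega)]
  · push_neg at htop
    obtain ⟨y, hy, hylt⟩ := htop
    have hhH : h < H := lt_of_lt_of_le hylt (hHtop y hy)
    have hfe : (Fkeys p).filter (fun x => x ≤ h ∨ ∀ y, isHead p y → y ≤ x) =
        insert H ((Fkeys p).filter (· ≤ h)) := by
      ext x
      rw [Finset.mem_filter, Finset.mem_insert, Finset.mem_filter]
      constructor
      · rintro ⟨hx, hle | hmaxx⟩
        · exact Or.inr ⟨hx, hle⟩
        · left
          exact le_antisymm (hHtop x (hkeyhead x hx)) (hmaxx H (hkeyhead H hHk))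
      · rintro (rfl | ⟨hx, hle⟩)
        · exact ⟨hHk, Or.inr (fun z hz => hHtop z hz)⟩
        · exact ⟨hx, Or.inl hle⟩
    have hfe2 : (Fkeys p).filter (· ≤ h) = insert h ((Fkeys p).filter (· < h)) := by
      ext x
      rw [Finset.mem_filter, Finset.mem_insert, Finset.mem_filter]
      constructor
      · rintro ⟨hx, hle⟩
        rcases eq_or_lt_of_le hle with rfl | hlt
        · exact Or.inl rfl
        · exact Or.inr ⟨hx, hlt⟩
      · rintro (rfl | ⟨hx, hlt⟩)
        · exact ⟨hkey, le_rfl⟩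
        · exact ⟨hx, by omega⟩
    rw [hfe, hfe2]
    rw [Finset.card_insert_of_notMem (fun hmem => by
      rcases Finset.mem_insert.mp hmem with heq | hmem
      · omega
      · have := (Finset.mem_filter.mp hmem).2
        omega)]
    rw [Finset.card_insert_of_notMem (fun hmem => by
      have := (Finset.mem_filter.mp hmem).2
      simp at this)]
    have hlt : rank (Fkeys p) h + 2 ≤ (Fkeys p).card := rank_plus_two_le hkey hHk hhH
    simp only [lrule]
    rw [if_neg (by omega)]
    unfold rank
    omega

end DF23
namespace DF23
open Finset

variable {n : ℕ}

lemma Dkey_block {p : FP n} {m : ℕ} (hm : m ∈ Dkeys p) :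
    p.part m ∈ p.parts ∧ m ∈ p.part m ∧ ∀ t ∈ p.part m, t ≤ m := by
  obtain ⟨⟨B, hB, hmB, hmax⟩, _⟩ := mem_Dkeys.mp hm
  have heq : p.part m = B := p.part_eq_of_mem hB hmB
  rw [heq]
  exact ⟨hB, hmB, hmax⟩

lemma Fkey_block {p : FP n} {h : ℕ} (hm : h ∈ Fkeys p) :
    p.part h ∈ p.parts ∧ h ∈ p.part h ∧ ∀ t ∈ p.part h, h ≤ t := by
  obtain ⟨⟨B, hB, hmB, hmin⟩, _⟩ := mem_Fkeys.mp hm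
  have heq : p.part h = B := p.part_eq_of_mem hB hmB
  rw [heq]
  exact ⟨hB, hmB, hmin⟩

abbrev DC (n : ℕ) := {p : FP n // kDistantNoncrossing 2 p}
abbrev FC (n : ℕ) := {p : FP n // kFrontNoncrossing 3 p}

noncomputable def PsiD : (Σ p : DC n, Option {m // m ∈ Dkeys p.1}) → DC (n + 1) :=
  fun x =>
    match x with
    | ⟨⟨p, hp⟩, none⟩ => ⟨extS p, Dnc_extS.mpr hp⟩
    | ⟨⟨p, hp⟩, some ⟨m, hm⟩⟩ =>
      ⟨extB p (p.part m) (Dkey_block hm).1,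
        (Dnc_extB (Dkey_block hm).1 (Dkey_block hm).2.1 (Dkey_block hm).2.2).mpr
          ⟨hp, (mem_Dkeys.mp hm).2⟩⟩

noncomputable def PsiF : (Σ p : FC n, Option {m // m ∈ Fkeys p.1}) → FC (n + 1) :=
  fun x =>
    match x with
    | ⟨⟨p, hp⟩, none⟩ => ⟨extS p, Fnc_extS.mpr hp⟩
    | ⟨⟨p, hp⟩, some ⟨m, hm⟩⟩ =>
      ⟨extB p (p.part m) (Fkey_block hm).1,
        (Fnc_extB (Fkey_block hm).1 (Fkey_block hm).2.1 (Fkey_block hm).2.2).mpr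
          ⟨hp, (mem_Fkeys.mp hm).2⟩⟩

lemma PsiD_bijective : Function.Bijective (PsiD (n := n)) := by
  constructor
  · rintro ⟨⟨p, hp⟩, o⟩ ⟨⟨q, hq⟩, o'⟩ hxy
    rcases o with _ | ⟨m, hm⟩ <;> rcases o' with _ | ⟨m', hm'⟩ <;>
      simp only [PsiD, Subtype.mk.injEq] at hxy
    · have := extS_inj hxy
      subst this
      rfl
    · exact absurd hxy extS_ne_extB
    · exact absurd hxy.symm extS_ne_extB
    · obtain ⟨hpq, hBB⟩ := extB_inj hxy
      subst hpq
      have h1 := Dkey_block hm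
      have h2 := Dkey_block hm'
      have hmm : m = m' := by
        have ha : m ∈ p.part m' := by rw [← hBB]; exact h1.2.1
        have hb : m' ∈ p.part m := by rw [hBB]; exact h2.2.1
        exact le_antisymm (h2.2.2 m ha) (h1.2.2 m' hb)
      subst hmm
      rfl
  · rintro ⟨q, hq⟩
    rcases ext_surj q with ⟨p, rfl⟩ | ⟨p, B, hB, rfl⟩
    · exact ⟨⟨⟨p, Dnc_extS.mp hq⟩, none⟩, rfl⟩
    · have hBne := p.nonempty_of_mem_parts hB
      have hmB : B.max' hBne ∈ B := B.max'_mem hBne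
      have hmax : ∀ t ∈ B, t ≤ B.max' hBne := fun t ht => B.le_max' t ht
      obtain ⟨hp, hcond⟩ := (Dnc_extB hB hmB hmax).mp hq
      have hm : B.max' hBne ∈ Dkeys p := mem_Dkeys.mpr ⟨⟨B, hB, hmB, hmax⟩, hcond⟩
      have hpart : p.part (B.max' hBne) = B := p.part_eq_of_mem hB hmB
      refine ⟨⟨⟨p, hp⟩, some ⟨B.max' hBne, hm⟩⟩, ?_⟩
      apply Subtype.ext
      show extB p (p.part (B.max' hBne)) (Dkey_block hm).1 = extB p B hB
      apply Finpartition.ext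
      rw [parts_extB, parts_extB, hpart]

lemma PsiF_bijective : Function.Bijective (PsiF (n := n)) := by
  constructor
  · rintro ⟨⟨p, hp⟩, o⟩ ⟨⟨q, hq⟩, o'⟩ hxy
    rcases o with _ | ⟨m, hm⟩ <;> rcases o' with _ | ⟨m', hm'⟩ <;>
      simp only [PsiF, Subtype.mk.injEq] at hxy
    · have := extS_inj hxy
      subst this
      rfl
    · exact absurd hxy extS_ne_extB
    · exact absurd hxy.symm extS_ne_extB
    · obtain ⟨hpq, hBB⟩ := extB_inj hxy
      subst hpq
      have h1 := Fkey_block hm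
      have h2 := Fkey_block hm'
      have hmm : m = m' := by
        have ha : m ∈ p.part m' := by rw [← hBB]; exact h1.2.1
        have hb : m' ∈ p.part m := by rw [hBB]; exact h2.2.1
        exact le_antisymm (h1.2.2 m' hb) (h2.2.2 m ha)
      subst hmm
      rfl
  · rintro ⟨q, hq⟩
    rcases ext_surj q with ⟨p, rfl⟩ | ⟨p, B, hB, rfl⟩
    · exact ⟨⟨⟨p, Fnc_extS.mp hq⟩, none⟩, rfl⟩
    · have hBne := p.nonempty_of_mem_parts hB
      have hmB : B.min' hBne ∈ B := B.min'_mem hBne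
      have hmin : ∀ t ∈ B, B.min' hBne ≤ t := fun t ht => B.min'_le t ht
      obtain ⟨hp, hcond⟩ := (Fnc_extB hB hmB hmin).mp hq
      have hhead : isHead p (B.min' hBne) := ⟨B, hB, hmB, hmin⟩
      have hm : B.min' hBne ∈ Fkeys p := mem_Fkeys.mpr ⟨hhead, hcond⟩
      have hpart : p.part (B.min' hBne) = B := p.part_eq_of_mem hB hmB
      refine ⟨⟨⟨p, hp⟩, some ⟨B.min' hBne, hm⟩⟩, ?_⟩
      apply Subtype.ext
      show extB p (p.part (B.min' hBne)) (Fkey_block hm).1 = extB p B hB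
      apply Finpartition.ext
      rw [parts_extB, parts_extB, hpart]

lemma labelD_PsiD (x : Σ p : DC n, Option {m // m ∈ Dkeys p.1}) :
    labelD (PsiD x).1 = lrule (labelD x.1.1) (x.2.map (fun m => rank (Dkeys x.1.1) m.1)) := by
  rcases x with ⟨⟨p, hp⟩, _ | ⟨m, hm⟩⟩
  · simp only [PsiD, Option.map]
    rw [labelD_extS]
    rfl
  · simp only [PsiD, Option.map]
    exact labelD_extB (Dkey_block hm).1 (Dkey_block hm).2.1 (Dkey_block hm).2.2 hm

lemma labelF_PsiF (x : Σ p : FC n, Option {m // m ∈ Fkeys p.1}) :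
    labelF (PsiF x).1 = lrule (labelF x.1.1) (x.2.map (fun m => rank (Fkeys x.1.1) m.1)) := by
  rcases x with ⟨⟨p, hp⟩, _ | ⟨m, hm⟩⟩
  · simp only [PsiF, Option.map]
    rw [labelF_extS]
    rfl
  · simp only [PsiF, Option.map]
    exact labelF_extB (Fkey_block hm).1 (Fkey_block hm).2.1 (Fkey_block hm).2.2 hm

end DF23
namespace DF23
open Finset

lemma parts_eq_empty (p : FP 0) : p.parts = ∅ := by
  rw [Finset.eq_empty_iff_forall_notMem]
  intro B hB
  obtain ⟨b, hb⟩ := p.nonempty_of_mem_parts hB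
  have := mem_part_le hB hb
  omega

lemma Dnc_zero (p : FP 0) : kDistantNoncrossing 2 p := by
  rintro ⟨i1, j1, i2, j2, ⟨_, B, hB, _⟩, _⟩
  rw [parts_eq_empty] at hB
  exact absurd hB (Finset.notMem_empty _)

lemma Fnc_zero (p : FP 0) : kFrontNoncrossing 3 p := by
  rintro ⟨i1, j1, i2, j2, ⟨_, B, hB, _⟩, _⟩
  rw [parts_eq_empty] at hB
  exact absurd hB (Finset.notMem_empty _)

noncomputable def fp0 : FP 0 where
  parts := ∅
  supIndep := by simp [Finset.supIndep_iff_pairwiseDisjoint]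
  sup_parts := by simp
  bot_notMem := Finset.notMem_empty _

lemma labelD_zero (p : FP 0) : labelD p = 1 := by
  unfold labelD
  have h : Dkeys p = ∅ := Finset.eq_empty_iff_forall_notMem.mpr
    (fun x hx => by have := Dkeys_le hx; omega)
  rw [h]
  rfl

lemma labelF_zero (p : FP 0) : labelF p = 1 := by
  unfold labelF
  have h : Fkeys p = ∅ := Finset.eq_empty_iff_forall_notMem.mpr
    (fun x hx => by have := Fkeys_le hx; omega)
  rw [h]
  rfl

lemma main : ∀ n : ℕ, ∃ e : DC n ≃ FC n, ∀ p : DC n, labelF (e p).1 = labelD p.1 := by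
  intro n
  induction n with
  | zero =>
    refine ⟨⟨fun _ => ⟨fp0, Fnc_zero _⟩, fun _ => ⟨fp0, Dnc_zero _⟩, fun x => ?_, fun x => ?_⟩,
      fun p => ?_⟩
    · exact Subtype.ext (Finpartition.ext (by rw [parts_eq_empty, parts_eq_empty]))
    · exact Subtype.ext (Finpartition.ext (by rw [parts_eq_empty, parts_eq_empty]))
    · rw [labelF_zero, labelD_zero]
  | succ n ih =>
    obtain ⟨e, he⟩ := ih
    have hcard : ∀ p : DC n, (Fkeys (e p).1).card = (Dkeys p.1).card := by
      intro p
      have := he p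
      unfold labelF labelD at this
      omega
    let fib : ∀ p : DC n, {m // m ∈ Dkeys p.1} ≃ {m // m ∈ Fkeys (e p).1} := fun p =>
      ((Dkeys p.1).orderIsoOfFin rfl).symm.toEquiv.trans
        ((Fkeys (e p).1).orderIsoOfFin (hcard p)).toEquiv
    have hfib : ∀ (p : DC n) (m : {m // m ∈ Dkeys p.1}),
        rank (Fkeys (e p).1) (fib p m).1 = rank (Dkeys p.1) m.1 := by
      intro p m
      set i := ((Dkeys p.1).orderIsoOfFin rfl).symm m with hi
      have h1 : ((Dkeys p.1).orderIsoOfFin rfl) i = m := OrderIso.apply_symm_apply _ m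
      have h2 : (fib p m) = ((Fkeys (e p).1).orderIsoOfFin (hcard p)) i := rfl
      rw [h2, rank_orderIsoOfFin]
      conv_rhs => rw [← h1]
      rw [rank_orderIsoOfFin]
    let eD := Equiv.ofBijective _ (PsiD_bijective (n := n))
    let eF := Equiv.ofBijective _ (PsiF_bijective (n := n))
    let mid := Equiv.sigmaCongr (β₁ := fun p : DC n => Option {m // m ∈ Dkeys p.1})
      (β₂ := fun p : FC n => Option {m // m ∈ Fkeys p.1}) e (fun p => Equiv.optionCongr (fib p))
    refine ⟨eD.symm.trans (mid.trans eF), ?_⟩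
    intro q
    set x := eD.symm q with hxdef
    have hq1 : q = PsiD x := by
      have h1 : eD x = q := by rw [hxdef]; exact eD.apply_symm_apply q
      rw [← h1]
      rfl
    have hL : labelD q.1 = lrule (labelD x.1.1) (x.2.map fun m => rank (Dkeys x.1.1) m.1) := by
      rw [hq1]
      exact labelD_PsiD x
    have happ : (eD.symm.trans (mid.trans eF)) q = PsiF (mid x) := rfl
    have hmid : mid x = ⟨e x.1, Equiv.optionCongr (fib x.1) x.2⟩ := by
      rcases x with ⟨p, o⟩
      rfl
    rw [happ, labelF_PsiF, hmid, hL]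
    have hopt : ((Equiv.optionCongr (fib x.1) x.2).map fun m => rank (Fkeys (e x.1).1) m.1) =
        x.2.map fun m => rank (Dkeys x.1.1) m.1 := by
      rcases hx2 : x.2 with _ | m
      · rfl
      · simp only [Equiv.optionCongr_apply, Option.map_some, Option.map_map, Function.comp]
        rw [hfib x.1 m]
    rw [hopt, he x.1]

end DF23

/-- number of cycles (including fixed points) of a permutation of `Fin n`. -/
def cycleCount {n : ℕ} (σ : Equiv.Perm (Fin n)) : ℕ :=
  σ.cycleType.card + (n - σ.cycleType.sum)

/-- the signed Stirling number of the first kind: `(-1)^(n-k)` times the number of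
permutations of `[n]` with `k` cycles. -/
noncomputable def stirlingFirst (n k : ℕ) : ℤ :=
  (-1) ^ (n - k) * (Nat.card {σ : Equiv.Perm (Fin n) // cycleCount σ = k} : ℤ)

/-- the Stirling number of the second kind: the number of set partitions of `[n]`
into `k` blocks. -/
noncomputable def stirlingSecond (n k : ℕ) : ℕ :=
  Nat.card {p : Finpartition (Finset.Icc 1 n : Finset ℕ) // p.parts.card = k}

/-- the Bell number: the number of set partitions of `[n]`. -/
noncomputable def bell (n : ℕ) : ℕ := Nat.card (Finpartition (Finset.Icc 1 n : Finset ℕ))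

/-- the number of `k`-distant noncrossing partitions of `[n]`. -/
noncomputable def dcount (k n : ℕ) : ℕ :=
  Nat.card {p : Finpartition (Finset.Icc 1 n : Finset ℕ) // kDistantNoncrossing k p}

/-- the number of `12⋯k12`-avoiding (= `k`-front noncrossing) partitions of `[n]`. -/
noncomputable def fcount (k n : ℕ) : ℕ :=
  Nat.card {p : Finpartition (Finset.Icc 1 n : Finset ℕ) // kFrontNoncrossing k p}

/-- The number of `2`-distant noncrossing partitions of `[n]` equals the number of
`12312`-avoiding (= `3`-front noncrossing) partitions of `[n]`. -/
theorem dcount_two_eq_fcount_three (n : ℕ) : dcount 2 n = fcount 3 n := by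
  obtain ⟨e, _⟩ := DF23.main n
  unfold dcount fcount
  exact Nat.card_congr e
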